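/- For a, a', b > 0 and z ∈ (0,1), ∫₀¹ (1-t)^(a+a'-1) t^(b-1) (1-zt)^(-(a'+b)) ₂F₁(a,b;a+a';1-t) dt = (Γ(a')Γ(b)/Γ(a'+b)) · ₂F₁(a',b;a+a';z). -/

import Mathlib

open MeasureTheory ProbabilityTheory Real Set Filter Topology

noncomputable def gammaDens (p σ y : ℝ) : ℝ :=
  if 0 < y then σ ^ p / Real.Gamma p * Real.exp (-(σ * y)) * y ^ (p - 1) else 0

noncomputable def gammaM (p σ : ℝ) : Measure ℝ :=
  MeasureTheory.volume.withDensity fun y => ENNReal.ofReal (gammaDens p σ y)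

noncomputable def beta1Dens (p q x : ℝ) : ℝ :=
  if 0 < x ∧ x < 1 then
    Real.Gamma (p + q) / (Real.Gamma p * Real.Gamma q) * x ^ (p - 1) * (1 - x) ^ (q - 1)
  else 0

noncomputable def beta1 (p q : ℝ) : Measure ℝ :=
  MeasureTheory.volume.withDensity fun x => ENNReal.ofReal (beta1Dens p q x)

noncomputable def beta2Dens (p q y : ℝ) : ℝ :=
  if 0 < y then
    Real.Gamma (p + q) / (Real.Gamma p * Real.Gamma q) * y ^ (p - 1) * (1 + y) ^ (-(p + q))
  else 0

noncomputable def beta2 (p q : ℝ) : Measure ℝ :=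
  MeasureTheory.volume.withDensity fun y => ENNReal.ofReal (beta2Dens p q y)

/-- Pochhammer (rising factorial) symbol `(a)_n`. -/
noncomputable def poch (a : ℝ) (n : ℕ) : ℝ := ∏ i ∈ Finset.range n, (a + (i : ℝ))

/-- Gauss hypergeometric function `₂F₁(a,b;c;x)`. -/
noncomputable def F21 (a b c x : ℝ) : ℝ :=
  ∑' n : ℕ, poch a n * poch b n / ((n.factorial : ℝ) * poch c n) * x ^ n

/-- Generalized hypergeometric `₃F₂(a₁,a₂,a₃;b₁,b₂;1)` at unit argument. -/
noncomputable def F32one (a1 a2 a3 b1 b2 : ℝ) : ℝ :=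
  ∑' n : ℕ, poch a1 n * poch a2 n * poch a3 n /
    ((n.factorial : ℝ) * poch b1 n * poch b2 n)

/-- Normalizing constant of the real beta-hypergeometric distribution. -/
noncomputable def Cbh (a a' b : ℝ) : ℝ :=
  Real.Gamma (a + b) / (Real.Gamma a * Real.Gamma b * F32one a a b (a + b) (a + a'))

noncomputable def bhDens (a a' b x : ℝ) : ℝ :=
  if 0 < x ∧ x < 1 then
    Cbh a a' b * x ^ (a - 1) * (1 - x) ^ (b - 1) * F21 a b (a + a') x
  else 0

/-- The real beta-hypergeometric distribution `μ_{a,a',b}`. -/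
noncomputable def bhMeasure (a a' b : ℝ) : Measure ℝ :=
  MeasureTheory.volume.withDensity fun x => ENNReal.ofReal (bhDens a a' b x)


lemma poch_zero (a : ℝ) : poch a 0 = 1 := rfl
lemma poch_succ (a : ℝ) (n : ℕ) : poch a (n+1) = poch a n * (a + n) :=
  Finset.prod_range_succ _ _
lemma poch_succ' (a : ℝ) (n : ℕ) : poch a (n+1) = a * poch (a+1) n := by
  induction n with
  | zero => simp [poch]
  | succ n ih => rw [poch_succ, ih, poch_succ]; push_cast; ring

lemma poch_pos {a : ℝ} (ha : 0 < a) (n : ℕ) : 0 < poch a n :=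
  Finset.prod_pos fun i _ => by positivity

lemma poch_one (n : ℕ) : poch 1 n = n.factorial := by
  induction n with
  | zero => simp [poch]
  | succ n ih => rw [poch_succ, ih, Nat.factorial_succ]; push_cast; ring

lemma Gamma_poch {a : ℝ} (ha : 0 < a) (n : ℕ) :
    Real.Gamma (a + n) = Real.Gamma a * poch a n := by
  induction n with
  | zero => simp [poch]
  | succ n ih =>
    have h : a + ((n:ℝ)+1) = (a + n) + 1 := by ring
    push_cast
    rw [h, Real.Gamma_add_one (by positivity), ih, poch_succ]; ring


lemma tendsto_aux (p : ℝ) (c : ℝ) (hc : 0 < c) :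
    Tendsto (fun n : ℕ => (p + n) / (c + n)) atTop (𝓝 1) := by
  have h0 : Tendsto (fun n : ℕ => (p - c) / (c + n)) atTop (𝓝 0) := by
    apply Tendsto.div_atTop tendsto_const_nhds
    exact tendsto_atTop_add_const_left _ c tendsto_natCast_atTop_atTop
  have := h0.const_add 1
  simp only [add_zero] at this
  apply this.congr' ?_
  filter_upwards [eventually_atTop.2 ⟨1, fun n hn => hn⟩] with n _
  have hcn : c + (n:ℝ) ≠ 0 := by positivity
  field_simp
  ring

lemma summable_hyp {p q d x : ℝ} (hp : 0 < p) (hq : 0 < q) (hd : 0 < d)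
    (hx0 : 0 < x) (hx1 : x < 1) :
    Summable (fun n : ℕ => poch p n * poch q n / (n.factorial * poch d n) * x ^ n) := by
  set u := fun n : ℕ => poch p n * poch q n / (n.factorial * poch d n) * x ^ n with hu
  have hupos : ∀ n, 0 < u n := fun n => by
    have := poch_pos hp n; have := poch_pos hq n; have := poch_pos hd n
    have := Nat.factorial_pos n
    positivity
  apply summable_of_ratio_test_tendsto_lt_one hx1
    (Eventually.of_forall fun n => (hupos n).ne')
  have key : ∀ n : ℕ, u (n+1) = u n * ((p + n) * ((q + n) / (d + n)) / (1 + n) * x) := by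
    intro n
    have h1 : (0:ℝ) < poch d n := poch_pos hd n
    have h2 : (0:ℝ) < (n.factorial : ℝ) := by exact_mod_cast Nat.factorial_pos n
    simp only [hu, poch_succ, Nat.factorial_succ]
    push_cast
    field_simp
    ring
  have hterm : ∀ n : ℕ, ‖u (n+1)‖ / ‖u n‖ = ((p + n) / (1 + n)) * ((q + n) / (d + n)) * x := by
    intro n
    have hr : (0:ℝ) ≤ ((p + n) / (1 + n)) * ((q + n) / (d + n)) * x := by positivity
    have hval : (p + (n:ℝ)) * ((q + n) / (d + n)) / (1 + n) * x
        = ((p + n) / (1 + n)) * ((q + n) / (d + n)) * x := by ring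
    rw [key n, hval, norm_mul, Real.norm_of_nonneg hr, mul_comm, mul_div_assoc,
      div_self (norm_ne_zero_iff.mpr (hupos n).ne'), mul_one]
  rw [show (𝓝 x) = 𝓝 (1 * 1 * x) by norm_num]
  apply Tendsto.congr (fun n => (hterm n).symm)
  exact (((tendsto_aux p 1 one_pos).mul (tendsto_aux q d hd)).mul_const x)


lemma summable_binom {s x : ℝ} (hs : 0 < s) (hx0 : 0 < x) (hx1 : x < 1) :
    Summable (fun n : ℕ => poch s n / n.factorial * x ^ n) := by
  have := summable_hyp hs one_pos one_pos hx0 hx1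
  apply this.congr
  intro n
  rw [poch_one]
  have : (n.factorial : ℝ) ≠ 0 := by exact_mod_cast n.factorial_pos.ne'
  field_simp

lemma iterDeriv_aux {s x : ℝ} (hs : 0 < s) (hx0 : 0 < x) (hx1 : x < 1) (k : ℕ) :
    ∀ t ∈ Icc (0:ℝ) x, iteratedDerivWithin k (fun t => (1-t) ^ (-s)) (Icc (0:ℝ) x) t
      = poch s k * (1-t) ^ (-s - k) := by
  have hud : UniqueDiffOn ℝ (Icc (0:ℝ) x) := uniqueDiffOn_Icc hx0
  induction k with
  | zero =>
    intro t ht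
    simp [poch]
  | succ k ih =>
    intro t ht
    have h1t : (0:ℝ) < 1 - t := by
      have := ht.2; linarith
    rw [iteratedDerivWithin_succ]
    rw [derivWithin_congr ih (ih t ht)]
    have hd : HasDerivAt (fun t : ℝ => poch s k * (1-t) ^ (-s - k))
        (poch s k * ((-s - k) * (1-t) ^ (-s - k - 1) * (-1))) t := by
      have h1 : HasDerivAt (fun t : ℝ => 1 - t) (-1) t := by
        simpa using (hasDerivAt_id t).const_sub 1
      have h2 : HasDerivAt (fun y : ℝ => y ^ (-s - k)) ((-s - k) * (1-t) ^ (-s - k - 1)) (1-t) :=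
        Real.hasDerivAt_rpow_const (Or.inl h1t.ne')
      exact ((h2.comp t h1).const_mul _).congr_deriv (by ring)
    rw [hd.differentiableAt.derivWithin (hud t ht), hd.deriv]
    rw [poch_succ]
    push_cast
    ring_nf

lemma hasSum_binom {s x : ℝ} (hs : 0 < s) (hx0 : 0 < x) (hx1 : x < 1) :
    HasSum (fun n : ℕ => poch s n / n.factorial * x ^ n) ((1 - x) ^ (-s)) := by
  set v := fun n : ℕ => poch s n / n.factorial * x ^ n with hv
  have hsum : Summable v := summable_binom hs hx0 hx1
  set f : ℝ → ℝ := fun t => (1-t) ^ (-s) with hf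
  -- Taylor expansion: partial sums tend to f x
  have key : ∀ n : ℕ, ∃ ξ ∈ Ioo (0:ℝ) x,
      f x - ∑ k ∈ Finset.range (n+1), v k
        = poch s (n+1) * (1-ξ) ^ (-s - (n+1:ℕ)) * (x - ξ) ^ n / n.factorial * x := by
    intro n
    have hud : UniqueDiffOn ℝ (Icc (0:ℝ) x) := uniqueDiffOn_Icc hx0
    have hcont : ContDiffOn ℝ n f (Icc (0:ℝ) x) := by
      intro t ht
      have h1t : (1:ℝ) - t ≠ 0 := by have := ht.2; intro h; nlinarith [ht.1]
      exact (((Real.contDiffAt_rpow_const_of_ne (p := -s) h1t).comp t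
        ((contDiff_const.sub contDiff_id).contDiffAt)).of_le le_top).contDiffWithinAt
    have hdiff : DifferentiableOn ℝ (iteratedDerivWithin n f (Icc (0:ℝ) x)) (Ioo (0:ℝ) x) := by
      have hg : DifferentiableOn ℝ (fun t => poch s n * (1-t) ^ (-s - n)) (Ioo (0:ℝ) x) := by
        intro t ht
        have h1t : (0:ℝ) < 1 - t := by have := ht.2; linarith
        exact (((Real.hasDerivAt_rpow_const (p := -s - n) (Or.inl h1t.ne')).comp t
          (by simpa using (hasDerivAt_id t).const_sub 1)).const_mul
          (poch s n)).differentiableAt.differentiableWithinAt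
      exact hg.congr fun t ht => iterDeriv_aux hs hx0 hx1 n t (Ioo_subset_Icc_self ht)
    obtain ⟨ξ, hξ, heq⟩ := taylor_mean_remainder_cauchy hx0.ne
      (by rwa [uIcc_of_le hx0.le]) (by rwa [uIcc_of_le hx0.le, uIoo_of_le hx0.le])
    rw [uIoo_of_le hx0.le] at hξ
    rw [uIcc_of_le hx0.le] at heq
    refine ⟨ξ, hξ, ?_⟩
    have htay : taylorWithinEval f n (Icc (0:ℝ) x) 0 x = ∑ k ∈ Finset.range (n+1), v k := by
      rw [taylor_within_apply]
      apply Finset.sum_congr rfl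
      intro k hk
      rw [iterDeriv_aux hs hx0 hx1 k 0 (by constructor <;> [rfl; exact hx0.le])]
      simp only [hv, smul_eq_mul]
      rw [sub_zero, sub_zero, Real.one_rpow]
      ring
    rw [htay] at heq
    rw [heq, iterDeriv_aux hs hx0 hx1 (n+1) ξ (Ioo_subset_Icc_self hξ), sub_zero]
  -- bound the remainder
  have hw : Summable (fun n : ℕ => poch (s+1) n / n.factorial * x ^ n) :=
    summable_binom (by linarith) hx0 hx1
  have hwz : Tendsto (fun n : ℕ => s * (1-x) ^ (-s-1) * x * (poch (s+1) n / n.factorial * x ^ n))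
      atTop (𝓝 0) := by
    simpa using (hw.tendsto_atTop_zero.const_mul (s * (1-x) ^ (-s-1) * x))
  have hrem : Tendsto (fun n : ℕ => f x - ∑ k ∈ Finset.range (n+1), v k) atTop (𝓝 0) := by
    apply squeeze_zero_norm ?_ hwz
    intro n
    obtain ⟨ξ, hξ, heq⟩ := key n
    have h1ξ : (0:ℝ) < 1 - ξ := by have := hξ.2; linarith
    have h1x : (0:ℝ) < 1 - x := by linarith
    have hxξ : (0:ℝ) ≤ x - ξ := by have := hξ.2; linarith
    rw [heq]
    have hsplit : (1-ξ) ^ (-s - ((n:ℝ)+1)) = (1-ξ) ^ (-s-1) * ((1-ξ) ^ (n:ℕ))⁻¹ := by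
      rw [← Real.rpow_natCast (1-ξ) n, ← Real.rpow_neg h1ξ.le,
        ← Real.rpow_add h1ξ]
      ring_nf
    have hbound : poch s (n+1) * (1-ξ) ^ (-s - ((n:ℕ)+1:ℕ)) * (x - ξ) ^ n / n.factorial * x
        ≤ s * (1-x) ^ (-s-1) * x * (poch (s+1) n / n.factorial * x ^ n) := by
      push_cast [hsplit]
      rw [poch_succ']
      have hfac : (0:ℝ) < n.factorial := by exact_mod_cast n.factorial_pos
      have hp1 : (0:ℝ) < poch (s+1) n := poch_pos (by linarith) n
      have e1 : (1-ξ) ^ (-s-1) ≤ (1-x) ^ (-s-1) :=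
        Real.rpow_le_rpow_of_nonpos h1x (by linarith [hξ.2]) (by linarith)
      have e2 : (x - ξ) ^ n * ((1-ξ) ^ (n:ℕ))⁻¹ ≤ x ^ n := by
        have he : (x - ξ) ^ n * ((1-ξ) ^ n)⁻¹ = ((x - ξ)/(1-ξ)) ^ n := by
          rw [div_pow]; ring
        rw [he]
        apply pow_le_pow_left₀ (by positivity)
        rw [div_le_iff₀ h1ξ]
        nlinarith [hξ.1, hξ.2]
      have epos1 : (0:ℝ) ≤ (1-ξ) ^ (-s-1) := by positivity
      have epos2 : (0:ℝ) ≤ (x - ξ) ^ n * ((1-ξ) ^ (n:ℕ))⁻¹ := by positivity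
      calc s * poch (s+1) n * ((1-ξ) ^ (-s-1) * ((1-ξ) ^ (n:ℕ))⁻¹) * (x-ξ) ^ n / n.factorial * x
          = (s * poch (s+1) n / n.factorial * x) * ((1-ξ) ^ (-s-1) * ((x-ξ) ^ n * ((1-ξ) ^ (n:ℕ))⁻¹)) := by
            ring
        _ ≤ (s * poch (s+1) n / n.factorial * x) * ((1-x) ^ (-s-1) * x ^ n) := by
            apply mul_le_mul_of_nonneg_left _ (by positivity)
            exact mul_le_mul e1 e2 epos2 (by positivity)
        _ = s * (1-x) ^ (-s-1) * x * (poch (s+1) n / n.factorial * x ^ n) := by ring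
    have hnn : (0:ℝ) ≤ poch s (n+1) * (1-ξ) ^ (-s - ((n:ℕ)+1:ℕ)) * (x - ξ) ^ n / n.factorial * x := by
      have := poch_pos hs (n+1)
      positivity
    rw [Real.norm_of_nonneg hnn]
    exact hbound
  -- conclude
  have hlim : Tendsto (fun n : ℕ => ∑ k ∈ Finset.range (n+1), v k) atTop (𝓝 (f x)) := by
    have := hrem.const_sub (f x)
    simpa using this
  have hlim' : Tendsto (fun n : ℕ => ∑ k ∈ Finset.range n, v k) atTop (𝓝 (f x)) :=
    (tendsto_add_atTop_iff_nat 1).mp hlim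
  have := hsum.hasSum.tendsto_sum_nat
  have heq : ∑' n, v n = f x := tendsto_nhds_unique this hlim'
  rw [show (1-x) ^ (-s) = f x from rfl]
  exact heq ▸ hsum.hasSum


lemma beta_integrand_eq {p q : ℝ} :
    ∀ x ∈ Icc (0:ℝ) 1, (x:ℂ) ^ ((p:ℂ) - 1) * (1 - (x:ℂ)) ^ ((q:ℂ) - 1)
      = ((x ^ (p-1) * (1-x) ^ (q-1) : ℝ) : ℂ) := by
  intro x hx
  have h1 : ((x:ℝ) ^ (p-1) : ℝ) = ((x:ℂ) ^ ((p:ℂ)-1) : ℂ) := by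
    rw [Complex.ofReal_cpow hx.1]
    push_cast
    ring_nf
  have h2 : ((1 - x : ℝ) ^ (q-1) : ℝ) = ((1 - (x:ℂ)) ^ ((q:ℂ)-1) : ℂ) := by
    rw [Complex.ofReal_cpow (by linarith [hx.2])]
    push_cast
    ring_nf
  push_cast
  rw [← h1, ← h2]

lemma beta_real {p q : ℝ} (hp : 0 < p) (hq : 0 < q) :
    ∫ t in Ioo (0:ℝ) 1, t ^ (p-1) * (1-t) ^ (q-1)
      = Real.Gamma p * Real.Gamma q / Real.Gamma (p+q) := by
  have hc := Complex.Gamma_mul_Gamma_eq_betaIntegral (s := (p:ℂ)) (t := (q:ℂ))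
    (by simpa using hp) (by simpa using hq)
  have hBeq : Complex.betaIntegral p q = ((∫ t in Ioo (0:ℝ) 1, t ^ (p-1) * (1-t) ^ (q-1) : ℝ) : ℂ) := by
    rw [Complex.betaIntegral]
    rw [intervalIntegral.integral_congr (g := fun x : ℝ => ((x ^ (p-1) * (1-x) ^ (q-1) : ℝ) : ℂ))
      (by intro x hx; exact beta_integrand_eq x (by rwa [uIcc_of_le zero_le_one] at hx))]
    rw [intervalIntegral.integral_of_le zero_le_one, integral_Ioc_eq_integral_Ioo]
    exact integral_ofReal
  rw [hBeq, ← Complex.ofReal_add, Complex.Gamma_ofReal, Complex.Gamma_ofReal,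
    Complex.Gamma_ofReal] at hc
  have hG : (0:ℝ) < Real.Gamma (p+q) := Real.Gamma_pos_of_pos (by linarith)
  have : Real.Gamma p * Real.Gamma q
      = Real.Gamma (p+q) * ∫ t in Ioo (0:ℝ) 1, t ^ (p-1) * (1-t) ^ (q-1) := by
    exact_mod_cast hc
  field_simp [this]
  rw [this]; ring

lemma beta_integrableOn {p q : ℝ} (hp : 0 < p) (hq : 0 < q) :
    IntegrableOn (fun t : ℝ => t ^ (p-1) * (1-t) ^ (q-1)) (Ioo (0:ℝ) 1) := by
  have hc : IntervalIntegrable (fun x : ℝ => (x:ℂ) ^ ((p:ℂ)-1) * (1-(x:ℂ)) ^ ((q:ℂ)-1))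
      volume 0 1 := Complex.betaIntegral_convergent (by simpa using hp) (by simpa using hq)
  rw [intervalIntegrable_iff_integrableOn_Ioo_of_le zero_le_one] at hc
  have h2 : IntegrableOn (fun x : ℝ => ((x ^ (p-1) * (1-x) ^ (q-1) : ℝ) : ℂ))
      (Ioo (0:ℝ) 1) volume :=
    hc.congr_fun (fun x hx => beta_integrand_eq x (Ioo_subset_Icc_self hx)) measurableSet_Ioo
  have h3 := h2.re
  apply MeasureTheory.IntegrableOn.congr_fun h3 ?_ measurableSet_Ioo
  intro x _
  simp

lemma beta_lintegral {p q : ℝ} (hp : 0 < p) (hq : 0 < q) :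
    ∫⁻ t in Ioo (0:ℝ) 1, ENNReal.ofReal (t ^ (p-1) * (1-t) ^ (q-1))
      = ENNReal.ofReal (Real.Gamma p * Real.Gamma q / Real.Gamma (p+q)) := by
  rw [← beta_real hp hq]
  rw [← ofReal_integral_eq_lintegral_ofReal (beta_integrableOn hp hq)]
  filter_upwards [ae_restrict_mem measurableSet_Ioo] with t ht
  have h1 : (0:ℝ) < t := ht.1
  have h2 : (0:ℝ) < 1 - t := by linarith [ht.2]
  positivity


lemma tsum_ofReal_eq {u : ℕ → ℝ} {r : ℝ} (hu : ∀ n, 0 ≤ u n) (hr : 0 ≤ r)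
    (h : ∑' n, ENNReal.ofReal (u n) = ENNReal.ofReal r) :
    Summable u ∧ ∑' n, u n = r := by
  have hfin : (∑' n, ENNReal.ofReal (u n)) ≠ ⊤ := by rw [h]; exact ENNReal.ofReal_ne_top
  have hs : Summable u := by
    have := ENNReal.summable_toReal hfin
    exact this.congr fun n => ENNReal.toReal_ofReal (hu n)
  refine ⟨hs, ?_⟩
  have := ENNReal.ofReal_tsum_of_nonneg hu hs
  rw [h] at this
  exact ((ENNReal.ofReal_eq_ofReal_iff (tsum_nonneg hu) hr).mp this)

lemma measurable_mono (α β : ℝ) :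
    Measurable (fun t : ℝ => ENNReal.ofReal (t ^ α * (1-t) ^ β)) := by
  fun_prop

lemma gauss_enn {p q d : ℝ} (hp : 0 < p) (hq : 0 < q) (hd : p + q < d) :
    ∑' n : ℕ, ENNReal.ofReal (poch p n * poch q n / (n.factorial * poch d n))
      = ENNReal.ofReal (Real.Gamma d * Real.Gamma (d-p-q)
          / (Real.Gamma (d-p) * Real.Gamma (d-q))) := by
  have hd0 : 0 < d := by linarith
  have hdq : 0 < d - q := by linarith
  have hdp : 0 < d - p := by linarith
  have hdpq : 0 < d - p - q := by linarith
  have hGq := Real.Gamma_pos_of_pos hq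
  have hGd := Real.Gamma_pos_of_pos hd0
  have hGdq := Real.Gamma_pos_of_pos hdq
  have hGdp := Real.Gamma_pos_of_pos hdp
  have hGdpq := Real.Gamma_pos_of_pos hdpq
  set C : ℝ := Real.Gamma q * Real.Gamma (d-q) / Real.Gamma d with hC
  have hCpos : 0 < C := by positivity
  set u : ℕ → ℝ := fun n => poch p n * poch q n / (n.factorial * poch d n) with hu
  have hupos : ∀ n, 0 < u n := fun n => by
    have := poch_pos hp n; have := poch_pos hq n; have := poch_pos hd0 n
    have := n.factorial_pos
    positivity
  -- the key integral computation
  have key : ∑' n : ℕ, ENNReal.ofReal (u n * C)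
      = ENNReal.ofReal (Real.Gamma q * Real.Gamma (d-p-q) / Real.Gamma (d-p)) := by
    have step1 : ∀ n : ℕ, u n * C
        = poch p n / n.factorial * (Real.Gamma (q+n) * Real.Gamma (d-q) / Real.Gamma (d+n)) := by
      intro n
      have h1 := poch_pos hp n; have h2 := poch_pos hq n; have h3 := poch_pos hd0 n
      have h4 := n.factorial_pos
      have e1 : Real.Gamma (q+n) = Real.Gamma q * poch q n := Gamma_poch hq n
      have e2 : Real.Gamma (d+n) = Real.Gamma d * poch d n := Gamma_poch hd0 n
      rw [hu, hC, e1, e2]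
      have h4' : (0:ℝ) < (n.factorial:ℝ) := by exact_mod_cast h4
      field_simp
    have step2 : ∀ n : ℕ, ENNReal.ofReal (u n * C)
        = ∫⁻ t in Ioo (0:ℝ) 1,
            ENNReal.ofReal (poch p n / n.factorial * (t ^ (q + n - 1) * (1-t) ^ (d-q-1))) := by
      intro n
      have hbeta := beta_lintegral (p := q + n) (q := d - q) (by positivity) hdq
      have hppos : 0 ≤ poch p n / n.factorial := by
        have := poch_pos hp n
        have := n.factorial_pos
        positivity
      rw [step1 n]
      have harr : q + (n:ℝ) + (d - q) = d + n := by ring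
      rw [harr] at hbeta
      calc ENNReal.ofReal (poch p n / n.factorial * (Real.Gamma (q+n) * Real.Gamma (d-q) / Real.Gamma (d+n)))
          = ENNReal.ofReal (poch p n / n.factorial)
            * ENNReal.ofReal (Real.Gamma (q+n) * Real.Gamma (d-q) / Real.Gamma (d+n)) :=
            ENNReal.ofReal_mul hppos
        _ = ENNReal.ofReal (poch p n / n.factorial)
            * ∫⁻ t in Ioo (0:ℝ) 1, ENNReal.ofReal (t ^ (q + n - 1) * (1-t) ^ (d-q-1)) := by
            rw [hbeta]
        _ = ∫⁻ t in Ioo (0:ℝ) 1,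
            ENNReal.ofReal (poch p n / n.factorial) * ENNReal.ofReal (t ^ (q + n - 1) * (1-t) ^ (d-q-1)) := by
            rw [← lintegral_const_mul _ (measurable_mono _ _)]
        _ = _ := by
            apply lintegral_congr
            intro t
            rw [← ENNReal.ofReal_mul hppos]
    rw [tsum_congr step2]
    rw [← lintegral_tsum (fun n => (show Measurable fun t : ℝ =>
      ENNReal.ofReal (poch p n / n.factorial * (t ^ (q + n - 1) * (1-t) ^ (d-q-1)))
      by fun_prop).aemeasurable)]
    have step3 : ∫⁻ t in Ioo (0:ℝ) 1, ∑' n : ℕ,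
        ENNReal.ofReal (poch p n / n.factorial * (t ^ (q + n - 1) * (1-t) ^ (d-q-1)))
        = ∫⁻ t in Ioo (0:ℝ) 1, ENNReal.ofReal (t ^ (q-1) * (1-t) ^ (d-p-q-1)) := by
      apply setLIntegral_congr_fun measurableSet_Ioo
      intro t ht
      have ht0 : (0:ℝ) < t := ht.1
      have ht1 : (0:ℝ) < 1 - t := by linarith [ht.2]
      have hbin : HasSum (fun n : ℕ => poch p n / n.factorial * t ^ n) ((1 - t) ^ (-p)) :=
        hasSum_binom hp ht0 ht.2
      set K : ℝ := t ^ (q-1) * (1-t) ^ (d-q-1) with hK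
      have hKpos : 0 < K := by positivity
      have hterm : ∀ n : ℕ, poch p n / n.factorial * (t ^ (q + n - 1) * (1-t) ^ (d-q-1))
          = poch p n / n.factorial * t ^ n * K := by
        intro n
        have : t ^ (q + (n:ℝ) - 1) = t ^ (q - 1) * t ^ (n:ℕ) := by
          rw [← Real.rpow_natCast t n, ← Real.rpow_add ht0]
          ring_nf
        rw [this, hK]
        ring
      have hsum2 : HasSum (fun n : ℕ => poch p n / n.factorial * t ^ n * K)
          ((1 - t) ^ (-p) * K) := hbin.mul_right K
      have hnn : ∀ n : ℕ, 0 ≤ poch p n / n.factorial * t ^ n * K := fun n => by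
        have := poch_pos hp n
        have := n.factorial_pos
        positivity
      calc ∑' n : ℕ, ENNReal.ofReal (poch p n / n.factorial * (t ^ (q + n - 1) * (1-t) ^ (d-q-1)))
          = ∑' n : ℕ, ENNReal.ofReal (poch p n / n.factorial * t ^ n * K) := by
            exact tsum_congr fun n => by rw [hterm n]
        _ = ENNReal.ofReal ((1 - t) ^ (-p) * K) := by
            rw [← ENNReal.ofReal_tsum_of_nonneg hnn hsum2.summable, hsum2.tsum_eq]
        _ = ENNReal.ofReal (t ^ (q-1) * (1-t) ^ (d-p-q-1)) := by
            congr 1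
            rw [hK]
            rw [show (1:ℝ) - t = (1-t) from rfl]
            rw [← mul_assoc, mul_comm ((1-t) ^ (-p)) _, mul_assoc, ← Real.rpow_add ht1]
            ring_nf
      done
    rw [step3]
    have := beta_lintegral (p := q) (q := d - p - q) hq hdpq
    rw [show q + (d - p - q) = d - p by ring] at this
    rw [this]
  -- conclude
  obtain ⟨hsummC, htsumC⟩ := tsum_ofReal_eq (fun n => (mul_pos (hupos n) hCpos).le)
    (by positivity) key
  have hsumu : Summable u := by
    have := hsummC.mul_right C⁻¹
    apply this.congr
    intro n
    field_simp
  have htsumu : ∑' n, u n = Real.Gamma d * Real.Gamma (d-p-q) / (Real.Gamma (d-p) * Real.Gamma (d-q)) := by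
    have h1 : (∑' n, u n) * C = Real.Gamma q * Real.Gamma (d-p-q) / Real.Gamma (d-p) := by
      rw [← htsumC, hsumu.tsum_mul_right]
    have h2 : Real.Gamma d * Real.Gamma (d-p-q) / (Real.Gamma (d-p) * Real.Gamma (d-q)) * C
        = Real.Gamma q * Real.Gamma (d-p-q) / Real.Gamma (d-p) := by
      rw [hC]; field_simp
    have := h1.trans h2.symm
    exact mul_right_cancel₀ hCpos.ne' this
  rw [← ENNReal.ofReal_tsum_of_nonneg (fun n => (hupos n).le) hsumu, htsumu]


theorem key_integral_identity (a a' b : ℝ) (ha : 0 < a) (ha' : 0 < a') (hb : 0 < b)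
    (z : ℝ) (hz : z ∈ Set.Ioo (0 : ℝ) 1) :
    ∫ t in Set.Ioo (0 : ℝ) 1,
        (1 - t) ^ (a + a' - 1) * t ^ (b - 1) * (1 - z * t) ^ (-(a' + b)) *
          F21 a b (a + a') (1 - t) =
      Real.Gamma a' * Real.Gamma b / Real.Gamma (a' + b) * F21 a' b (a + a') z := by
  obtain ⟨hz0, hz1⟩ := hz
  have hc : 0 < a + a' := by linarith
  have hs : 0 < a' + b := by linarith
  set A : ℕ → ℝ := fun n => poch a n * poch b n / (n.factorial * poch (a + a') n) with hA
  set C : ℕ → ℝ := fun m => poch (a' + b) m / m.factorial with hC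
  have hApos : ∀ n, 0 < A n := fun n => by
    have := poch_pos ha n; have := poch_pos hb n; have := poch_pos hc n
    have := n.factorial_pos; positivity
  have hCpos : ∀ m, 0 < C m := fun m => by
    have := poch_pos hs m; have := m.factorial_pos; positivity
  set W : ℕ × ℕ → ℝ → ENNReal := fun nm t =>
    ENNReal.ofReal (A nm.1 * (C nm.2 * z ^ nm.2))
      * ENNReal.ofReal (t ^ (b + nm.2 - 1) * (1 - t) ^ ((a + a') + nm.1 - 1)) with hW
  -- pointwise identity on Ioo 0 1
  have step0 : ∀ t ∈ Ioo (0:ℝ) 1, (∑' nm : ℕ × ℕ, W nm t)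
      = ENNReal.ofReal ((1 - t) ^ (a + a' - 1) * t ^ (b - 1) * (1 - z * t) ^ (-(a' + b)) *
          F21 a b (a + a') (1 - t)) := by
    intro t ht
    have ht0 : (0:ℝ) < t := ht.1
    have ht1 : (0:ℝ) < 1 - t := by linarith [ht.2]
    have hzt0 : (0:ℝ) < z * t := by positivity
    have hzt1 : z * t < 1 := by nlinarith [ht.2]
    have hK : (0:ℝ) ≤ t ^ (b-1) * (1-t) ^ (a+a'-1) := by positivity
    have hsum1 : Summable (fun n : ℕ => A n * (1-t) ^ n) :=
      summable_hyp ha hb hc ht1 (by linarith)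
    have hsum2 : HasSum (fun m : ℕ => C m * (z*t) ^ m) ((1 - z*t) ^ (-(a'+b))) :=
      hasSum_binom hs hzt0 hzt1
    have hXnn : ∀ n : ℕ, (0:ℝ) ≤ A n * (1-t) ^ n :=
      fun n => mul_nonneg (hApos n).le (pow_nonneg ht1.le n)
    have hYnn : ∀ m : ℕ, (0:ℝ) ≤ C m * (z*t) ^ m :=
      fun m => mul_nonneg (hCpos m).le (pow_nonneg hzt0.le m)
    have hF : 0 ≤ F21 a b (a + a') (1-t) := tsum_nonneg fun n => hXnn n
    calc ∑' nm : ℕ × ℕ, W nm t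
        = ∑' n : ℕ, ∑' m : ℕ, W (n, m) t := ENNReal.tsum_prod'
      _ = ∑' n : ℕ, ∑' m : ℕ, (ENNReal.ofReal (A n * (1-t) ^ n)
            * ENNReal.ofReal (C m * (z*t) ^ m))
            * ENNReal.ofReal (t ^ (b-1) * (1-t) ^ (a+a'-1)) := by
          apply tsum_congr; intro n; apply tsum_congr; intro m
          simp only [hW]
          have hACnn : (0:ℝ) ≤ A n * (C m * z ^ m) :=
            mul_nonneg (hApos n).le (mul_nonneg (hCpos m).le (pow_nonneg hz0.le m))
          rw [← ENNReal.ofReal_mul (hXnn n), ← ENNReal.ofReal_mul (mul_nonneg (hXnn n) (hYnn m)),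
            ← ENNReal.ofReal_mul hACnn]
          congr 1
          have e1 : t ^ (b + (m:ℝ) - 1) = t ^ (b - 1) * t ^ (m:ℕ) := by
            rw [← Real.rpow_natCast t m, ← Real.rpow_add ht0]; ring_nf
          have e2 : (1-t) ^ ((a + a') + (n:ℝ) - 1) = (1-t) ^ (a + a' - 1) * (1-t) ^ (n:ℕ) := by
            rw [← Real.rpow_natCast (1-t) n, ← Real.rpow_add ht1]; ring_nf
          rw [e1, e2, mul_pow]
          ring
      _ = (∑' n : ℕ, ENNReal.ofReal (A n * (1-t) ^ n))
            * ((∑' m : ℕ, ENNReal.ofReal (C m * (z*t) ^ m))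
              * ENNReal.ofReal (t ^ (b-1) * (1-t) ^ (a+a'-1))) := by
          rw [← ENNReal.tsum_mul_right]
          apply tsum_congr; intro n
          simp_rw [mul_assoc]
          rw [ENNReal.tsum_mul_left, ENNReal.tsum_mul_right]
      _ = ENNReal.ofReal (F21 a b (a + a') (1-t))
            * (ENNReal.ofReal ((1 - z*t) ^ (-(a'+b)))
              * ENNReal.ofReal (t ^ (b-1) * (1-t) ^ (a+a'-1))) := by
          rw [← ENNReal.ofReal_tsum_of_nonneg hXnn hsum1,
            ← ENNReal.ofReal_tsum_of_nonneg hYnn hsum2.summable, hsum2.tsum_eq]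
          rfl
      _ = _ := by
          rw [← ENNReal.ofReal_mul (Real.rpow_nonneg (by linarith : (0:ℝ) ≤ 1 - z*t) _),
            ← ENNReal.ofReal_mul hF]
          congr 1
          ring
  -- measurability
  have hWmeas : ∀ nm : ℕ × ℕ, Measurable (W nm) := by
    intro nm
    simp only [hW]
    fun_prop
  have hGmeas : Measurable (fun t => ∑' nm : ℕ × ℕ, W nm t) :=
    Measurable.ennreal_tsum hWmeas
  -- nonnegativity of the integrand
  have hinn : ∀ t ∈ Ioo (0:ℝ) 1,
      0 ≤ (1 - t) ^ (a + a' - 1) * t ^ (b - 1) * (1 - z * t) ^ (-(a' + b)) *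
        F21 a b (a + a') (1 - t) := by
    intro t ht
    have ht1 : (0:ℝ) < 1 - t := by linarith [ht.2]
    have hF : 0 ≤ F21 a b (a + a') (1-t) := tsum_nonneg fun n =>
      mul_nonneg (hApos n).le (pow_nonneg ht1.le n)
    have h1 : (0:ℝ) ≤ (1 - t) ^ (a + a' - 1) := Real.rpow_nonneg ht1.le _
    have h2 : (0:ℝ) ≤ t ^ (b - 1) := Real.rpow_nonneg ht.1.le _
    have h3 : (0:ℝ) ≤ (1 - z * t) ^ (-(a' + b)) := Real.rpow_nonneg (by nlinarith [ht.2]) _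
    positivity
  -- step 1 : the integral is the toReal of the lintegral of the double series
  have step1 : ∫ t in Ioo (0:ℝ) 1,
      (1 - t) ^ (a + a' - 1) * t ^ (b - 1) * (1 - z * t) ^ (-(a' + b)) *
        F21 a b (a + a') (1 - t)
      = (∫⁻ t in Ioo (0:ℝ) 1, ∑' nm : ℕ × ℕ, W nm t).toReal := by
    rw [setIntegral_congr_fun measurableSet_Ioo
      (g := fun t => (∑' nm : ℕ × ℕ, W nm t).toReal)
      (fun t ht => by
        show _ = (∑' nm : ℕ × ℕ, W nm t).toReal
        rw [step0 t ht, ENNReal.toReal_ofReal (hinn t ht)])]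
    apply integral_toReal hGmeas.aemeasurable
    rw [ae_restrict_iff' measurableSet_Ioo]
    apply Eventually.of_forall
    intro t ht
    rw [step0 t ht]
    exact ENNReal.ofReal_lt_top
  -- step 2 : swap lintegral and sum, and evaluate the beta integrals
  have step2 : ∫⁻ t in Ioo (0:ℝ) 1, ∑' nm : ℕ × ℕ, W nm t
      = ∑' nm : ℕ × ℕ, ENNReal.ofReal (A nm.1 * (C nm.2 * z ^ nm.2))
          * ENNReal.ofReal (Real.Gamma (b + nm.2) * Real.Gamma ((a + a') + nm.1)
              / Real.Gamma ((b + nm.2) + ((a + a') + nm.1))) := by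
    rw [lintegral_tsum (fun nm => (hWmeas nm).aemeasurable)]
    apply tsum_congr
    intro nm
    calc ∫⁻ t in Ioo (0:ℝ) 1, W nm t
        = ENNReal.ofReal (A nm.1 * (C nm.2 * z ^ nm.2))
          * ∫⁻ t in Ioo (0:ℝ) 1,
              ENNReal.ofReal (t ^ ((b + nm.2) - 1) * (1 - t) ^ (((a + a') + nm.1) - 1)) := by
          rw [← lintegral_const_mul _ (by fun_prop)]
      _ = _ := by
          rw [beta_lintegral (by positivity) (by positivity)]
  -- step 3 : evaluate the double sum
  have hGb := Real.Gamma_pos_of_pos hb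
  have hGa' := Real.Gamma_pos_of_pos ha'
  have hGc := Real.Gamma_pos_of_pos hc
  have hGs := Real.Gamma_pos_of_pos hs
  set D : ℝ := Real.Gamma a' * Real.Gamma b / Real.Gamma (a' + b) with hD
  have step3 : ∑' nm : ℕ × ℕ, ENNReal.ofReal (A nm.1 * (C nm.2 * z ^ nm.2))
          * ENNReal.ofReal (Real.Gamma (b + nm.2) * Real.Gamma ((a + a') + nm.1)
              / Real.Gamma ((b + nm.2) + ((a + a') + nm.1)))
      = ENNReal.ofReal (D * F21 a' b (a + a') z) := by
    rw [ENNReal.tsum_prod', ENNReal.tsum_comm]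
    have inner : ∀ m : ℕ, ∑' n : ℕ, ENNReal.ofReal (A n * (C m * z ^ m))
          * ENNReal.ofReal (Real.Gamma (b + m) * Real.Gamma ((a + a') + n)
              / Real.Gamma ((b + m) + ((a + a') + n)))
        = ENNReal.ofReal (D * (poch a' m * poch b m / (m.factorial * poch (a + a') m) * z ^ m)) := by
      intro m
      have hdm : 0 < (a + a') + b + (m:ℝ) := by positivity
      have hGbm := Real.Gamma_pos_of_pos (show (0:ℝ) < b + m by positivity)
      have hGdm := Real.Gamma_pos_of_pos hdm
      set E : ℝ := C m * z ^ m * (Real.Gamma (b + m) * Real.Gamma (a + a')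
        / Real.Gamma ((a + a') + b + m)) with hE
      have hEnn : 0 ≤ E := by
        have := (hCpos m).le
        positivity
      have hterm : ∀ n : ℕ, A n * (C m * z ^ m)
            * (Real.Gamma (b + m) * Real.Gamma ((a + a') + n)
              / Real.Gamma ((b + m) + ((a + a') + n)))
          = E * (poch a n * poch b n / (n.factorial * poch ((a + a') + b + m) n)) := by
        intro n
        have e1 : Real.Gamma ((a + a') + n) = Real.Gamma (a + a') * poch (a + a') n :=
          Gamma_poch hc n
        have e2 : Real.Gamma ((b + m) + ((a + a') + n))
            = Real.Gamma ((a + a') + b + m) * poch ((a + a') + b + m) n := by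
          rw [show (b + (m:ℝ)) + ((a + a') + n) = ((a + a') + b + m) + (n:ℕ) by push_cast; ring]
          exact Gamma_poch hdm n
        have h1 := poch_pos ha n; have h2 := poch_pos hb n; have h3 := poch_pos hc n
        have h4 := poch_pos hdm n
        have h5 : (0:ℝ) < n.factorial := by exact_mod_cast n.factorial_pos
        rw [hA, hE, e1, e2]
        field_simp
      rw [tsum_congr (fun n => by rw [← ENNReal.ofReal_mul
        (mul_nonneg (hApos n).le (mul_nonneg (hCpos m).le (pow_nonneg hz0.le m))), hterm n,
        ENNReal.ofReal_mul hEnn])]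
      rw [ENNReal.tsum_mul_left]
      rw [gauss_enn ha hb (by push_cast; linarith [Nat.cast_nonneg (α := ℝ) m])]
      rw [← ENNReal.ofReal_mul hEnn]
      congr 1
      -- real identity : E * gauss value = D * w m
      have e3 : Real.Gamma ((a + a') + b + (m:ℝ) - a - b) = Real.Gamma a' * poch a' m := by
        rw [show (a + a') + b + (m:ℝ) - a - b = a' + (m:ℕ) by push_cast; ring]
        exact Gamma_poch ha' m
      have e4 : Real.Gamma ((a + a') + b + (m:ℝ) - a) = Real.Gamma (a' + b) * poch (a' + b) m := by
        rw [show (a + a') + b + (m:ℝ) - a = (a' + b) + (m:ℕ) by push_cast; ring]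
        exact Gamma_poch hs m
      have e5 : Real.Gamma ((a + a') + b + (m:ℝ) - b) = Real.Gamma (a + a') * poch (a + a') m := by
        rw [show (a + a') + b + (m:ℝ) - b = (a + a') + (m:ℕ) by push_cast; ring]
        exact Gamma_poch hc m
      have e6 : Real.Gamma (b + (m:ℝ)) = Real.Gamma b * poch b m := Gamma_poch hb m
      have h1 := poch_pos ha' m; have h2 := poch_pos hb m; have h3 := poch_pos hc m
      have h4 := poch_pos hs m
      have h5 : (0:ℝ) < m.factorial := by exact_mod_cast m.factorial_pos
      rw [hE, hC, hD, e3, e4, e5, e6]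
      field_simp
    rw [tsum_congr inner]
    have hw : Summable (fun m : ℕ => poch a' m * poch b m / (m.factorial * poch (a + a') m) * z ^ m) :=
      summable_hyp ha' hb hc hz0 hz1
    have hwnn : ∀ m : ℕ, 0 ≤ poch a' m * poch b m / (m.factorial * poch (a + a') m) * z ^ m := by
      intro m
      have := poch_pos ha' m; have := poch_pos hb m; have := poch_pos hc m
      have : (0:ℝ) < m.factorial := by exact_mod_cast m.factorial_pos
      positivity
    have hDnn : 0 ≤ D := by rw [hD]; positivity
    rw [tsum_congr (fun m => (ENNReal.ofReal_mul hDnn)), ENNReal.tsum_mul_left,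
      ← ENNReal.ofReal_tsum_of_nonneg hwnn hw, ← ENNReal.ofReal_mul hDnn]
    rfl
  rw [step1, step2, step3, ENNReal.toReal_ofReal]
  have hFz : 0 ≤ F21 a' b (a + a') z := tsum_nonneg fun m => by
    have := poch_pos ha' m; have := poch_pos hb m; have := poch_pos hc m
    have : (0:ℝ) < m.factorial := by exact_mod_cast m.factorial_pos
    positivity
  have hDnn : 0 ≤ D := by rw [hD]; positivity
  positivity
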